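/- KL divergence bound for Bernoulli mixtures: Let α, p, q ∈ (0,1) and set γ = αp + (1−α)q. Then α·p·log(p/γ) + α·(1−p)·log((1−p)/(1−γ)) + (1−α)·q·log(q/γ) + (1−α)·(1−q)·log((1−q)/(1−γ)) ≤ α(1−α)(p−q)² / (γ(1−γ)). -/

import Mathlib

/-- **KL divergence bound for Bernoulli mixtures.** With `γ = αp + (1−α)q`, the expected
Kullback–Leibler divergence `E_y[D(P(a|y) ‖ P(a))]` is at most `α(1−α)(p−q)²/(γ(1−γ))`. -/
theorem kl_bernoulli_mixture_bound (α p q : ℝ)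
    (hα0 : 0 < α) (hα1 : α < 1) (hp0 : 0 < p) (hp1 : p < 1) (hq0 : 0 < q) (hq1 : q < 1) :
    α * p * Real.log (p / (α * p + (1 - α) * q)) +
      α * (1 - p) * Real.log ((1 - p) / (1 - (α * p + (1 - α) * q))) +
      (1 - α) * q * Real.log (q / (α * p + (1 - α) * q)) +
      (1 - α) * (1 - q) * Real.log ((1 - q) / (1 - (α * p + (1 - α) * q))) ≤
    α * (1 - α) * (p - q) ^ 2 /
      ((α * p + (1 - α) * q) * (1 - (α * p + (1 - α) * q))) := by
  set γ := α * p + (1 - α) * q with hγ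
  have hα1' : 0 < 1 - α := by linarith
  have hγ0 : 0 < γ := by positivity
  have hγ1 : γ < 1 := by nlinarith
  have hγ1' : 0 < 1 - γ := by linarith
  have h1 : Real.log (p / γ) ≤ p / γ - 1 :=
    Real.log_le_sub_one_of_pos (by positivity)
  have hp1' : 0 < 1 - p := by linarith
  have hq1' : 0 < 1 - q := by linarith
  have h2 : Real.log ((1 - p) / (1 - γ)) ≤ (1 - p) / (1 - γ) - 1 :=
    Real.log_le_sub_one_of_pos (div_pos hp1' hγ1')
  have h3 : Real.log (q / γ) ≤ q / γ - 1 :=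
    Real.log_le_sub_one_of_pos (by positivity)
  have h4 : Real.log ((1 - q) / (1 - γ)) ≤ (1 - q) / (1 - γ) - 1 :=
    Real.log_le_sub_one_of_pos (div_pos hq1' hγ1')
  have key : α * p * (p / γ - 1) + α * (1 - p) * ((1 - p) / (1 - γ) - 1) +
      (1 - α) * q * (q / γ - 1) + (1 - α) * (1 - q) * ((1 - q) / (1 - γ) - 1) =
      α * (1 - α) * (p - q) ^ 2 / (γ * (1 - γ)) := by
    rw [hγ]
    have hd1 : α * p + (1 - α) * q ≠ 0 := hγ0.ne'
    have hd2 : 1 - (α * p + (1 - α) * q) ≠ 0 := hγ1'.ne'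
    field_simp
    ring
  calc α * p * Real.log (p / γ) + α * (1 - p) * Real.log ((1 - p) / (1 - γ)) +
      (1 - α) * q * Real.log (q / γ) + (1 - α) * (1 - q) * Real.log ((1 - q) / (1 - γ))
      ≤ α * p * (p / γ - 1) + α * (1 - p) * ((1 - p) / (1 - γ) - 1) +
        (1 - α) * q * (q / γ - 1) + (1 - α) * (1 - q) * ((1 - q) / (1 - γ) - 1) := by
        gcongr <;> nlinarith
    _ = α * (1 - α) * (p - q) ^ 2 / (γ * (1 - γ)) := key
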